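/- Let p ≥ 3 be an integer and β > 0 a real, and let Γ be a graph on m vertices with minimum degree at least (1 − 2/(2p−3) + β)·m. Then every copy of K_p in Γ contains an edge that lies in at least β·(m/(8p))^(p−2) copies of K_p. -/

import Mathlib

open SimpleGraph

/-- `ContainsCopy G Γ` : `Γ` contains a (not necessarily induced) copy of `G`. -/
def ContainsCopy {α β : Type*} (G : SimpleGraph α) (Γ : SimpleGraph β) : Prop :=
  ∃ f : α → β, Function.Injective f ∧ ∀ ⦃a b⦄, G.Adj a b → Γ.Adj (f a) (f b)

/-- The book graph `B_{k,n}`: `n` vertices, the first `k` of which form the spine. -/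
def Book (k n : ℕ) : SimpleGraph (Fin n) :=
  SimpleGraph.fromRel (fun a b => (a : ℕ) < k ∨ (b : ℕ) < k)

/-- The Ramsey number `r(G,H)`: the least `N` such that every graph `Γ` on `N` vertices
contains a copy of `G`, or its complement contains a copy of `H`. -/
noncomputable def ramseyNumber {α β : Type*} (G : SimpleGraph α) (H : SimpleGraph β) : ℕ :=
  sInf {N | ∀ Γ : SimpleGraph (Fin N), ContainsCopy G Γ ∨ ContainsCopy H Γᶜ}

/-- The degree of a vertex. -/
noncomputable def degCount {V : Type*} (Γ : SimpleGraph V) (v : V) : ℕ :=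
  (Γ.neighborSet v).ncard

/-- The number of copies of `K_p` in `Γ`, i.e. sets of `p` pairwise adjacent vertices. -/
noncomputable def cliqueCount {V : Type*} (Γ : SimpleGraph V) (p : ℕ) : ℕ :=
  {s : Finset V | Γ.IsNClique p s}.ncard

/-- `Γ` contains an induced copy of the complete multipartite graph with all parts
of size `t`, with parts `P 0, …, P (r-1)`. -/
def IsCompleteMultipartiteIn {V : Type*} (Γ : SimpleGraph V) {r : ℕ} (t : ℕ)
    (P : Fin r → Finset V) : Prop :=
  (∀ i, (P i).card = t) ∧
  (∀ i j, i ≠ j → Disjoint (P i) (P j)) ∧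
  (∀ i, ∀ a ∈ P i, ∀ b ∈ P i, ¬ Γ.Adj a b) ∧
  (∀ i j, i ≠ j → ∀ a ∈ P i, ∀ b ∈ P j, Γ.Adj a b)

/-- The number of edges of `Γ` with both endpoints inside `s`. -/
noncomputable def edgesInside {V : Type*} (Γ : SimpleGraph V) (s : Finset V) : ℕ :=
  {e ∈ Γ.edgeSet | ∀ v ∈ e, v ∈ s}.ncard

open Finset
open scoped Classical

section KeyLemma

lemma aux_pow_bound (a : ℝ) (ha : 0 ≤ a) : ∀ n : ℕ, (1 - n * a) * (1 + a) ^ n ≤ 1 := by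
  intro n
  induction n with
  | zero => simp
  | succ n ih =>
      have h1 : (0:ℝ) ≤ (1 + a) ^ n := by positivity
      have hstep : (1 - ((n+1 : ℕ) : ℝ) * a) * (1 + a) ^ (n+1) ≤ (1 - (n:ℝ) * a) * (1 + a) ^ n := by
        have hc : ((n+1 : ℕ) : ℝ) = (n : ℝ) + 1 := by push_cast; ring
        rw [hc, pow_succ]
        have hkey : (1 - ((n:ℝ) + 1) * a) * (1 + a) ≤ 1 - (n:ℝ) * a := by nlinarith [sq_nonneg a, Nat.cast_nonneg (α := ℝ) n]
        calc (1 - ((n:ℝ) + 1) * a) * ((1 + a) ^ n * (1 + a))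
            = ((1 - ((n:ℝ) + 1) * a) * (1 + a)) * (1 + a) ^ n := by ring
          _ ≤ (1 - (n:ℝ) * a) * (1 + a) ^ n := by
              apply mul_le_mul_of_nonneg_right hkey h1
      linarith

variable {m : ℕ} (Γ : SimpleGraph (Fin m)) (β : ℝ)

/-- cliques of size `p` inside `A` containing `e`. -/
noncomputable def cliqueBtw (p : ℕ) (A e : Finset (Fin m)) : Finset (Finset (Fin m)) :=
  (A.powersetCard p).filter fun q => Γ.IsNClique p q ∧ e ⊆ q

noncomputable def Tcnt (p : ℕ) (A s : Finset (Fin m)) : ℕ :=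
  ∑ e ∈ s.powersetCard 2, (cliqueBtw Γ p A e).card

lemma self_mem_cliqueBtw {p : ℕ} {A s e : Finset (Fin m)} (hs : Γ.IsNClique p s)
    (hsA : s ⊆ A) (he : e ⊆ s) : s ∈ cliqueBtw Γ p A e := by
  simp only [cliqueBtw, mem_filter, mem_powersetCard]
  exact ⟨⟨hsA, hs.2⟩, hs, he⟩

lemma choose_le_Tcnt {p : ℕ} {A s : Finset (Fin m)} (hs : Γ.IsNClique p s) (hsA : s ⊆ A) :
    p.choose 2 ≤ Tcnt Γ p A s := by
  have h : ∀ e ∈ s.powersetCard 2, 1 ≤ (cliqueBtw Γ p A e).card := by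
    intro e he
    rw [mem_powersetCard] at he
    exact card_pos.mpr ⟨s, self_mem_cliqueBtw Γ hs hsA he.1⟩
  calc p.choose 2 = ∑ _e ∈ s.powersetCard 2, 1 := by
        rw [sum_const, card_powersetCard, hs.2, smul_eq_mul, mul_one]
    _ ≤ Tcnt Γ p A s := Finset.sum_le_sum h

lemma double_count (A s : Finset (Fin m)) :
    ∑ w ∈ A, (s.filter fun u => Γ.Adj w u).card = ∑ u ∈ s, (A.filter fun w => Γ.Adj u w).card := by
  simp_rw [Finset.card_filter]
  rw [Finset.sum_comm]
  refine Finset.sum_congr rfl fun u _ => Finset.sum_congr rfl fun w _ => ?_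
  congr 1
  simp [adj_comm]

/-- Lower bound on the number of vertices of `A` adjacent to at least `p-1` vertices of `s`. -/
lemma Xlow (p : ℕ) (hp : 3 ≤ p) (A s : Finset (Fin m))
    (hdeg : ∀ v ∈ A, (1 - 2 / (2 * (p:ℝ) - 3) + β) * A.card ≤ ((A.filter fun u => Γ.Adj v u).card : ℝ))
    (hs : Γ.IsNClique p s) (hsA : s ⊆ A) :
    (p : ℝ) * ((1 - 2 / (2 * (p:ℝ) - 3) + β) * A.card) ≤
      ((p - 2 : ℕ) : ℝ) * A.card +
        2 * (((A.filter fun w => p - 1 ≤ (s.filter fun u => Γ.Adj w u).card).card : ℕ) : ℝ) := by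
  -- nat-level upper bound on the adjacency count
  set X := A.filter fun w => p - 1 ≤ (s.filter fun u => Γ.Adj w u).card with hX
  have hupper : ∑ w ∈ A, (s.filter fun u => Γ.Adj w u).card ≤ (p - 2) * A.card + 2 * X.card := by
    have hsplit := Finset.sum_filter_add_sum_filter_not A
      (fun w => p - 1 ≤ (s.filter fun u => Γ.Adj w u).card) (fun w => (s.filter fun u => Γ.Adj w u).card)
    have h1 : ∑ w ∈ X, (s.filter fun u => Γ.Adj w u).card ≤ X.card * p := by
      refine le_trans (Finset.sum_le_sum fun w _ => ?_) (by rw [sum_const, smul_eq_mul])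
      exact le_trans (card_filter_le _ _) (le_of_eq hs.2)
    have h2 : ∑ w ∈ A.filter (fun w => ¬ (p - 1 ≤ (s.filter fun u => Γ.Adj w u).card)),
        (s.filter fun u => Γ.Adj w u).card
        ≤ (A.filter (fun w => ¬ (p - 1 ≤ (s.filter fun u => Γ.Adj w u).card))).card * (p - 2) := by
      refine le_trans (Finset.sum_le_sum fun w hw => ?_) (by rw [sum_const, smul_eq_mul])
      rw [mem_filter] at hw
      omega
    have hcards : X.card + (A.filter (fun w => ¬ (p - 1 ≤ (s.filter fun u => Γ.Adj w u).card))).card = A.card :=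
      Finset.card_filter_add_card_filter_not _
    have hXA : X.card ≤ A.card := card_filter_le _ _
    calc ∑ w ∈ A, (s.filter fun u => Γ.Adj w u).card
        = ∑ w ∈ X, (s.filter fun u => Γ.Adj w u).card +
          ∑ w ∈ A.filter (fun w => ¬ (p - 1 ≤ (s.filter fun u => Γ.Adj w u).card)),
            (s.filter fun u => Γ.Adj w u).card := hsplit.symm
      _ ≤ X.card * p + (A.filter (fun w => ¬ (p - 1 ≤ (s.filter fun u => Γ.Adj w u).card))).card * (p - 2) := by
          exact Nat.add_le_add h1 h2
      _ ≤ (p - 2) * A.card + 2 * X.card := by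
          set Y := (A.filter (fun w => ¬ (p - 1 ≤ (s.filter fun u => Γ.Adj w u).card))).card with hY
          have h3 : X.card * p = X.card * (p - 2) + 2 * X.card := by
            conv_lhs => rw [show p = (p - 2) + 2 by omega]
            ring
          have h4 : X.card * (p - 2) + Y * (p - 2) = (p - 2) * A.card := by
            rw [← hcards]; ring
          omega
  -- real-level lower bound
  have hlower : (p : ℝ) * ((1 - 2 / (2 * (p:ℝ) - 3) + β) * A.card) ≤
      ((∑ w ∈ A, (s.filter fun u => Γ.Adj w u).card : ℕ) : ℝ) := by
    rw [double_count]
    push_cast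
    calc (p : ℝ) * ((1 - 2 / (2 * (p:ℝ) - 3) + β) * A.card)
        = ∑ _u ∈ s, (1 - 2 / (2 * (p:ℝ) - 3) + β) * A.card := by
          rw [sum_const, hs.2, nsmul_eq_mul]
      _ ≤ ∑ u ∈ s, ((A.filter fun w => Γ.Adj u w).card : ℝ) :=
          Finset.sum_le_sum fun u hu => hdeg u (hsA hu)
  refine le_trans hlower ?_
  exact_mod_cast hupper

lemma overcount (p : ℕ) (hp : 1 ≤ p) (A s : Finset (Fin m)) (X' : Finset (Fin m))
    (hX'A : X' ⊆ A) (hX's : ∀ w ∈ X', w ∉ s) (zf : Fin m → Fin m) :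
    ∑ w ∈ X', Tcnt Γ p (A.filter fun u => Γ.Adj w u) (s.erase (zf w))
      ≤ (p - 1) * Tcnt Γ (p+1) A s := by
  set D : Fin m → Finset ((_ : Finset (Fin m)) × Finset (Fin m)) := fun w =>
    ((s.erase (zf w)).powersetCard 2).sigma fun e => cliqueBtw Γ p (A.filter fun u => Γ.Adj w u) e
    with hD
  set S1 : Finset ((_ : Fin m) × (_ : Finset (Fin m)) × Finset (Fin m)) := X'.sigma D with hS1
  set S2 : Finset ((_ : Finset (Fin m)) × Finset (Fin m)) :=
    (s.powersetCard 2).sigma (fun e => cliqueBtw Γ (p+1) A e) with hS2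
  have hcard1 : S1.card = ∑ w ∈ X', Tcnt Γ p (A.filter fun u => Γ.Adj w u) (s.erase (zf w)) := by
    rw [hS1, card_sigma]
    exact Finset.sum_congr rfl fun w _ => by rw [hD, card_sigma]; rfl
  have hcard2 : S2.card = Tcnt Γ (p+1) A s := by rw [hS2, card_sigma]; rfl
  set F : ((_ : Fin m) × (_ : Finset (Fin m)) × Finset (Fin m)) → ((_ : Finset (Fin m)) × Finset (Fin m)) :=
    fun t => ⟨t.2.1, insert t.1 t.2.2⟩ with hF
  -- unpack membership in S1
  have hmem : ∀ t ∈ S1, t.1 ∈ X' ∧ t.2.1 ⊆ s.erase (zf t.1) ∧ t.2.1.card = 2 ∧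
      t.2.2 ⊆ A.filter (fun u => Γ.Adj t.1 u) ∧ Γ.IsNClique p t.2.2 ∧ t.2.1 ⊆ t.2.2 := by
    intro t ht
    rw [hS1, mem_sigma] at ht
    obtain ⟨ht1, ht2⟩ := ht
    rw [hD, mem_sigma, mem_powersetCard] at ht2
    obtain ⟨⟨he1, he2⟩, hq⟩ := ht2
    rw [cliqueBtw, mem_filter, mem_powersetCard] at hq
    exact ⟨ht1, he1, he2, hq.1.1, hq.2.1, hq.2.2⟩
  have hnotmem : ∀ t ∈ S1, t.1 ∉ t.2.2 := by
    intro t ht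
    obtain ⟨_, _, _, hqA, _, _⟩ := hmem t ht
    intro hwq
    exact (Γ.irrefl) ((mem_filter.mp (hqA hwq)).2)
  have hmaps : ∀ t ∈ S1, F t ∈ S2 := by
    intro t ht
    obtain ⟨htX, he1, he2, hqA, hq, heq⟩ := hmem t ht
    rw [hS2, mem_sigma, mem_powersetCard]
    have hsub : t.2.1 ⊆ s := he1.trans (erase_subset _ _)
    refine ⟨⟨hsub, he2⟩, ?_⟩
    rw [cliqueBtw, mem_filter, mem_powersetCard]
    have hwA : t.1 ∈ A := hX'A htX
    have hqA' : t.2.2 ⊆ A := fun x hx => (mem_filter.mp (hqA hx)).1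
    have hwq : t.1 ∉ t.2.2 := hnotmem t ht
    refine ⟨⟨insert_subset hwA hqA', ?_⟩, ?_, ?_⟩
    · rw [card_insert_of_notMem hwq, hq.2]
    · exact hq.insert fun b hb => (mem_filter.mp (hqA hb)).2
    · exact heq.trans (subset_insert _ _)
  have hfiber : ∀ b ∈ S1.image F, (S1.filter fun t => F t = b).card ≤ p - 1 := by
    intro b hb
    obtain ⟨t0, ht0, rfl⟩ := mem_image.mp hb
    have hbS2 := hmaps t0 ht0
    rw [hS2, mem_sigma, mem_powersetCard] at hbS2
    obtain ⟨⟨hes, he2⟩, hQ⟩ := hbS2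
    rw [cliqueBtw, mem_filter, mem_powersetCard] at hQ
    obtain ⟨⟨hQA, hQcard⟩, hQclique, heQ⟩ := hQ
    have hFt0 : F t0 = ⟨t0.2.1, insert t0.1 t0.2.2⟩ := rfl
    have hcard : ((insert t0.1 t0.2.2) \ t0.2.1).card = p - 1 := by
      have h1 : t0.2.1 ⊆ insert t0.1 t0.2.2 := heQ
      have h2 : (insert t0.1 t0.2.2).card = p + 1 := hQcard
      have h3 : t0.2.1.card = 2 := he2
      rw [card_sdiff_of_subset h1, h2, h3]
      omega
    rw [← hcard]
    apply Finset.card_le_card_of_injOn (fun t => t.1)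
    · rintro ⟨w, e, q⟩ ht
      rw [mem_coe, mem_filter] at ht
      obtain ⟨htS1, htF⟩ := ht
      have htF' : (⟨e, insert w q⟩ : (_ : Finset (Fin m)) × Finset (Fin m)) = ⟨t0.2.1, insert t0.1 t0.2.2⟩ := htF
      obtain ⟨he', hq'⟩ := Sigma.mk.inj_iff.mp htF'
      have hq2 : insert w q = insert t0.1 t0.2.2 := eq_of_heq hq'
      show w ∈ (insert t0.1 t0.2.2) \ t0.2.1
      rw [mem_sdiff, ← hq2, ← he']
      refine ⟨mem_insert_self _ _, fun hte => ?_⟩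
      have hesub : e ⊆ s.erase (zf w) := (hmem _ htS1).2.1
      have hws : w ∉ s := hX's w (hmem _ htS1).1
      exact hws (mem_of_mem_erase (hesub hte))
    · rintro ⟨w, e, q⟩ ht ⟨w', e', q'⟩ ht' h11
      simp only [coe_filter, Set.mem_setOf_eq] at ht ht'
      obtain ⟨htS1, htF⟩ := ht
      obtain ⟨ht'S1, ht'F⟩ := ht'
      simp only at h11
      subst h11
      have htF2 : (⟨e, insert w q⟩ : (_ : Finset (Fin m)) × Finset (Fin m)) = ⟨t0.2.1, insert t0.1 t0.2.2⟩ := htF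
      have ht'F2 : (⟨e', insert w q'⟩ : (_ : Finset (Fin m)) × Finset (Fin m)) = ⟨t0.2.1, insert t0.1 t0.2.2⟩ := ht'F
      obtain ⟨he1, hq1⟩ := Sigma.mk.inj_iff.mp htF2
      obtain ⟨he1', hq1'⟩ := Sigma.mk.inj_iff.mp ht'F2
      have hq2 : insert w q = insert t0.1 t0.2.2 := eq_of_heq hq1
      have hq2' : insert w q' = insert t0.1 t0.2.2 := eq_of_heq hq1'
      have hwq : w ∉ q := hnotmem _ htS1
      have hwq' : w ∉ q' := hnotmem _ ht'S1
      have hqq : q = q' := by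
        calc q = (insert w q).erase w := (erase_insert hwq).symm
          _ = (insert w q').erase w := by rw [hq2, hq2']
          _ = q' := erase_insert hwq'
      have hee : e = e' := by rw [he1, he1']
      subst hqq; subst hee; rfl
  have h1 : S1.card ≤ (p - 1) * (S1.image F).card :=
    Finset.card_le_mul_card_image S1 (p-1) hfiber
  have h2 : (S1.image F).card ≤ S2.card :=
    Finset.card_le_card fun b hb => by
      obtain ⟨t, ht, rfl⟩ := mem_image.mp hb
      exact hmaps t ht
  calc ∑ w ∈ X', Tcnt Γ p (A.filter fun u => Γ.Adj w u) (s.erase (zf w))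
      = S1.card := hcard1.symm
    _ ≤ (p - 1) * (S1.image F).card := h1
    _ ≤ (p - 1) * S2.card := Nat.mul_le_mul_left _ h2
    _ = (p - 1) * Tcnt Γ (p+1) A s := by rw [hcard2]

lemma base_inj (A s X' : Finset (Fin m)) (hs : Γ.IsNClique 3 s) (hsA : s ⊆ A)
    (hX'A : X' ⊆ A) (hX's : ∀ w ∈ X', w ∉ s)
    (hX'2 : ∀ w ∈ X', 2 ≤ (s.filter fun u => Γ.Adj w u).card) :
    X'.card ≤ Tcnt Γ 3 A s := by
  set S2 : Finset ((_ : Finset (Fin m)) × Finset (Fin m)) :=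
    (s.powersetCard 2).sigma (fun e => cliqueBtw Γ 3 A e) with hS2
  have hcard2 : S2.card = Tcnt Γ 3 A s := by rw [hS2, card_sigma]; rfl
  -- choice of a 2-subset of neighbors in s
  set ef : Fin m → Finset (Fin m) := fun w =>
    if h : ∃ e ⊆ s.filter (fun u => Γ.Adj w u), e.card = 2 then h.choose else ∅ with hef
  have hefspec : ∀ w ∈ X', ef w ⊆ s.filter (fun u => Γ.Adj w u) ∧ (ef w).card = 2 := by
    intro w hw
    have h : ∃ e ⊆ s.filter (fun u => Γ.Adj w u), e.card = 2 :=
      Finset.exists_subset_card_eq (hX'2 w hw)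
    rw [hef]
    simp only [dif_pos h]
    exact ⟨h.choose_spec.1, h.choose_spec.2⟩
  rw [← hcard2]
  apply Finset.card_le_card_of_injOn (fun w => (⟨ef w, insert w (ef w)⟩ : (_ : Finset (Fin m)) × Finset (Fin m)))
  · intro w hw
    obtain ⟨hsub, hc2⟩ := hefspec w hw
    have hefs : ef w ⊆ s := hsub.trans (filter_subset _ _)
    have hadj : ∀ u ∈ ef w, Γ.Adj w u := fun u hu => (mem_filter.mp (hsub hu)).2
    have hwef : w ∉ ef w := fun hin => Γ.irrefl (hadj w hin)
    rw [hS2, mem_coe, mem_sigma, mem_powersetCard]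
    refine ⟨⟨hefs, hc2⟩, ?_⟩
    rw [cliqueBtw, mem_filter, mem_powersetCard]
    have hclique2 : Γ.IsNClique 2 (ef w) := ⟨hs.1.subset (by exact_mod_cast hefs), hc2⟩
    refine ⟨⟨insert_subset (hX'A hw) (hefs.trans hsA), ?_⟩, ?_, subset_insert _ _⟩
    · rw [card_insert_of_notMem hwef, hc2]
    · exact hclique2.insert hadj
  · intro w hw w' hw' heq
    simp only [Sigma.mk.inj_iff] at heq
    obtain ⟨he, hq⟩ := heq
    have hq2 : insert w (ef w) = insert w' (ef w') := eq_of_heq hq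
    rw [Finset.mem_coe] at hw hw'
    have hw's : w' ∉ ef w := by
      rw [he]
      intro hin
      exact hX's w' hw' (((hefspec w' hw').1.trans (filter_subset _ _)) hin)
    have : w' ∈ insert w (ef w) := by rw [hq2]; exact mem_insert_self _ _
    rcases mem_insert.mp this with h | h
    · exact h.symm
    · exact absurd h hw's

set_option maxHeartbeats 4000000 in
theorem key (hβ : 0 < β) :
    ∀ p : ℕ, 3 ≤ p → ∀ A s : Finset (Fin m),
      (∀ v ∈ A, (1 - 2 / (2 * (p:ℝ) - 3) + β) * A.card ≤ ((A.filter fun u => Γ.Adj v u).card : ℝ)) →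
      Γ.IsNClique p s → s ⊆ A →
      (p.choose 2 : ℝ) * (β * ((A.card : ℝ) / (8 * p)) ^ (p - 2)) ≤ (Tcnt Γ p A s : ℝ) := by
  intro p hp
  induction p, hp using Nat.le_induction with
  | base =>
      intro A s hdeg hs hsA
      set M : ℝ := (A.card : ℝ) with hM
      have hM0 : 0 ≤ M := by positivity
      have hT3 : ((3:ℕ).choose 2 : ℝ) ≤ (Tcnt Γ 3 A s : ℝ) := by
        exact_mod_cast choose_le_Tcnt Γ hs hsA
      norm_num at hT3 ⊢
      have hT3' : (3:ℝ) ≤ (Tcnt Γ 3 A s : ℝ) := by exact_mod_cast hT3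
      by_cases hcase : β * (M / 24) ≤ 1
      · nlinarith [hβ.le, div_nonneg hM0 (by norm_num : (0:ℝ) ≤ 24), hT3']
      · push_neg at hcase
        have hβM : 24 < β * M := by nlinarith [hcase]
        -- X-set bound
        have hX := Xlow Γ β 3 le_rfl A s hdeg hs hsA
        set X := A.filter fun w => 3 - 1 ≤ (s.filter fun u => Γ.Adj w u).card with hXdef
        set X' := X \ s with hX'def
        have hX'X : (X.card : ℝ) ≤ (X'.card : ℝ) + 3 := by
          have h := Finset.card_le_card_sdiff_add_card (s := X) (t := s)
          rw [hs.2] at h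
          exact_mod_cast h
        have hXc : (3:ℝ) * ((1 - 2/(2*(3:ℝ)-3) + β) * M) ≤ ((3-2 : ℕ):ℝ) * M + 2 * (X.card : ℝ) := hX
        have hXlow : (3/2 : ℝ) * (β * M) ≤ (X.card : ℝ) := by
          norm_num at hXc
          nlinarith [hXc]
        -- injection into Tcnt
        have hinj : (X'.card : ℕ) ≤ Tcnt Γ 3 A s := by
          apply base_inj Γ A s X' hs hsA
          · exact (sdiff_subset).trans (filter_subset _ _)
          · intro w hw
            exact (mem_sdiff.mp hw).2
          · intro w hw
            have := (mem_filter.mp (mem_sdiff.mp hw).1).2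
            omega
        have hinj' : (X'.card : ℝ) ≤ (Tcnt Γ 3 A s : ℝ) := by exact_mod_cast hinj
        nlinarith [hinj', hX'X, hXlow]
  | succ p hp IH =>
      intro A s hdeg hs hsA
      set M : ℝ := (A.card : ℝ) with hMdef
      have hMnn : 0 ≤ M := by positivity
      have hpr : (3:ℝ) ≤ (p:ℝ) := by exact_mod_cast hp
      have ecast1 : ((p+1:ℕ):ℝ) = (p:ℝ)+1 := by push_cast; ring
      have ecast2 : ((p-1:ℕ):ℝ) = (p:ℝ)-1 := by
        rw [Nat.cast_sub (show 1 ≤ p by omega)]; push_cast; ring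
      have h2p1 : (0:ℝ) < 2*(p:ℝ)-1 := by linarith
      have h2p3 : (0:ℝ) < 2*(p:ℝ)-3 := by linarith
      rw [show p+1-2 = p-1 from by omega, ecast1]
      by_cases hcase : β * (M / (8*((p:ℝ)+1))) ^ (p-1) ≤ 1
      · have hT : (((p+1).choose 2 : ℕ) : ℝ) ≤ (Tcnt Γ (p+1) A s : ℝ) := by
          exact_mod_cast choose_le_Tcnt Γ hs hsA
        calc ((p+1).choose 2 : ℝ) * (β * (M/(8*((p:ℝ)+1)))^(p-1))
            ≤ ((p+1).choose 2 : ℝ) * 1 := by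
              apply mul_le_mul_of_nonneg_left hcase (by positivity)
          _ = ((p+1).choose 2 : ℝ) := mul_one _
          _ ≤ _ := hT
      · push_neg at hcase
        -- basic facts
        have hsne : s.Nonempty := by
          rw [← Finset.card_pos, hs.2]; omega
        obtain ⟨v0, hv0⟩ := hsne
        have hMp : (p:ℝ)+1 ≤ M := by
          have h := Finset.card_le_card hsA
          rw [hs.2] at h
          calc (p:ℝ)+1 = ((p+1:ℕ):ℝ) := ecast1.symm
            _ ≤ M := by
              show ((p+1:ℕ):ℝ) ≤ ((A.card:ℕ):ℝ)
              exact_mod_cast h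
        have hMpos : 0 < M := by linarith
        -- degree hypothesis with clean casts
        have hdeg' : ∀ v ∈ A, (1 - 2/(2*(p:ℝ)-1) + β) * M ≤ ((A.filter fun u => Γ.Adj v u).card : ℝ) := by
          intro v hv
          have h := hdeg v hv
          rw [ecast1, show 2*((p:ℝ)+1)-3 = 2*(p:ℝ)-1 from by ring] at h
          exact h
        -- β < 2/(2p-1)
        have hv0A := hsA hv0
        have hft : ((A.filter fun u => Γ.Adj v0 u).card : ℝ) ≤ M - 1 := by
          have hfsub : (A.filter fun u => Γ.Adj v0 u) ⊆ A.erase v0 := by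
            intro u hu
            rw [mem_filter] at hu
            rw [mem_erase]
            refine ⟨fun h => Γ.irrefl (h ▸ hu.2), hu.1⟩
          have h1 := Finset.card_le_card hfsub
          rw [Finset.card_erase_of_mem hv0A] at h1
          have h2 : 1 ≤ A.card := Finset.card_pos.mpr ⟨v0, hv0A⟩
          have h3 : ((A.card - 1 : ℕ):ℝ) = M - 1 := by
            rw [Nat.cast_sub h2]; push_cast; rfl
          rw [← h3]
          exact_mod_cast h1
        have hβc : β * M ≤ (2/(2*(p:ℝ)-1)) * M - 1 := by
          have h := hdeg' v0 hv0A
          linarith only [h, hft]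
        have hβlt : β < 2/(2*(p:ℝ)-1) := by
          by_contra hc
          push_neg at hc
          linarith only [hβc, mul_le_mul_of_nonneg_right hc hMnn]
        -- M > 8(p+1)
        have h8M : 8*((p:ℝ)+1) < M := by
          have hβ1 : β < 1 := by
            have : 2/(2*(p:ℝ)-1) ≤ 1 := by
              rw [div_le_one h2p1]; linarith
            linarith
          by_contra hc
          push_neg at hc
          have hxnn : 0 ≤ M / (8*((p:ℝ)+1)) := by positivity
          have hx1 : M / (8*((p:ℝ)+1)) ≤ 1 := by
            rw [div_le_one (by positivity)]; linarith
          have hpow1 : (M / (8*((p:ℝ)+1)))^(p-1) ≤ 1 := pow_le_one₀ hxnn hx1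
          have hb2 := mul_le_mul_of_nonneg_left hpow1 hβ.le
          linarith only [hcase, hb2, hβ1]
        -- X set bound
        have hX := Xlow Γ β (p+1) (by omega) A s hdeg hs hsA
        set X := A.filter fun w => p + 1 - 1 ≤ (s.filter fun u => Γ.Adj w u).card with hXdef
        set X' := X \ s with hX'def
        have hX'A : X' ⊆ A := sdiff_subset.trans (filter_subset _ _)
        have hX's : ∀ w ∈ X', w ∉ s := fun w hw => (mem_sdiff.mp hw).2
        have hX'X : (X.card : ℝ) ≤ (X'.card : ℝ) + ((p:ℝ)+1) := by
          have h := Finset.card_le_card_sdiff_add_card (s := X) (t := s)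
          rw [hs.2] at h
          calc (X.card : ℝ) ≤ ((X'.card + (p+1) : ℕ) : ℝ) := by exact_mod_cast h
            _ = (X'.card : ℝ) + ((p:ℝ)+1) := by push_cast; ring
        have hXc : ((p:ℝ)+1) * ((1 - 2/(2*(p:ℝ)-1) + β) * M) ≤ ((p:ℝ)-1)*M + 2*(X.card:ℝ) := by
          have h := hX
          rw [show (p+1) - 2 = p - 1 from by omega] at h
          rw [ecast1, ecast2, show 2*((p:ℝ)+1)-3 = 2*(p:ℝ)-1 from by ring] at h
          exact h
        have hX'low : ((p:ℝ)-2)/(2*(p:ℝ)-1) * M + ((p:ℝ)+1)*(β*M)/2 - ((p:ℝ)+1) ≤ (X'.card : ℝ) := by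
          have ecdM : (2 - ((p:ℝ)+1)*(2/(2*(p:ℝ)-1)))*M = 2*((((p:ℝ)-2)/(2*(p:ℝ)-1))*M) := by
            rw [show 2 - ((p:ℝ)+1)*(2/(2*(p:ℝ)-1)) = 2*(((p:ℝ)-2)/(2*(p:ℝ)-1)) from by
              field_simp
              ring]
            ring
          linarith only [hXc, ecdM, hX'X]
        -- choice function zf
        set zf : Fin m → Fin m := fun w =>
          if h : ∃ z ∈ s, ∀ u ∈ s, u ≠ z → Γ.Adj w u then h.choose else v0 with hzfdef
        have hzf : ∀ w ∈ X', zf w ∈ s ∧ ∀ u ∈ s, u ≠ zf w → Γ.Adj w u := by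
          intro w hw
          have hwX : w ∈ X := (mem_sdiff.mp hw).1
          have hwcard : p ≤ (s.filter fun u => Γ.Adj w u).card := by
            have h := (mem_filter.mp hwX).2
            omega
          have hnot : (s.filter fun u => ¬ Γ.Adj w u).card ≤ 1 := by
            have hadd := Finset.card_filter_add_card_filter_not (s := s)
              (p := fun u => Γ.Adj w u)
            rw [hs.2] at hadd
            omega
          have hex : ∃ z ∈ s, ∀ u ∈ s, u ≠ z → Γ.Adj w u := by
            by_cases hne : (s.filter fun u => ¬ Γ.Adj w u).Nonempty
            · obtain ⟨z, hz⟩ := hne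
              rw [mem_filter] at hz
              refine ⟨z, hz.1, fun u hu hne' => ?_⟩
              by_contra hnadj
              have hpair : ({u, z} : Finset (Fin m)) ⊆ s.filter fun x => ¬ Γ.Adj w x := by
                intro x hx
                rcases mem_insert.mp hx with rfl | hx
                · exact mem_filter.mpr ⟨hu, hnadj⟩
                · rw [mem_singleton] at hx
                  subst hx
                  exact mem_filter.mpr ⟨hz.1, hz.2⟩
              have hcard2 := Finset.card_le_card hpair
              rw [Finset.card_pair hne'] at hcard2
              omega
            · rw [Finset.not_nonempty_iff_eq_empty] at hne
              refine ⟨v0, hv0, fun u hu _ => ?_⟩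
              by_contra hnadj
              have : u ∈ s.filter fun x => ¬ Γ.Adj w x := mem_filter.mpr ⟨hu, hnadj⟩
              rw [hne] at this
              exact absurd this (notMem_empty u)
          rw [hzfdef]
          simp only [dif_pos hex]
          exact ⟨hex.choose_spec.1, hex.choose_spec.2⟩
        -- the quantities
        set M0 : ℝ := ((2*(p:ℝ)-3)/(2*(p:ℝ)-1)) * M with hM0def
        have hM0nn : 0 ≤ M0 := by
          rw [hM0def]
          exact mul_nonneg (div_nonneg h2p3.le h2p1.le) hMnn
        set y : ℝ := (M0/(8*(p:ℝ)))^(p-2) with hydef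
        have hynn : 0 ≤ y := by
          rw [hydef]
          exact pow_nonneg (div_nonneg hM0nn (by positivity)) _
        set L : ℝ := (p.choose 2 : ℝ) * (β * y) with hLdef
        have hLnn : 0 ≤ L := by
          rw [hLdef]
          exact mul_nonneg (by positivity) (mul_nonneg hβ.le hynn)
        -- per-w bound via IH
        have hperw : ∀ w ∈ X',
            L ≤ (Tcnt Γ p (A.filter fun u => Γ.Adj w u) (s.erase (zf w)) : ℝ) := by
          intro w hw
          obtain ⟨hzs, hzadj⟩ := hzf w hw
          have hwA : w ∈ A := hX'A hw
          set Aw := A.filter fun u => Γ.Adj w u with hAwdef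
          have hMW : (1 - 2/(2*(p:ℝ)-1) + β) * M ≤ (Aw.card : ℝ) := hdeg' w hwA
          have hM0MW : M0 ≤ (Aw.card : ℝ) := by
            have he : ((2*(p:ℝ)-3)/(2*(p:ℝ)-1)) = 1 - 2/(2*(p:ℝ)-1) := by
              field_simp
              ring
            rw [hM0def, he]
            linarith only [hMW, mul_nonneg hβ.le hMnn]
          have hs' : Γ.IsNClique p (s.erase (zf w)) := by
            constructor
            · exact hs.1.subset (by
                intro x hx
                simp only [Finset.coe_erase, Set.mem_diff] at hx
                exact hx.1)
            · rw [card_erase_of_mem hzs, hs.2]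
              omega
          have hs'Aw : s.erase (zf w) ⊆ Aw := by
            intro u hu
            rw [hAwdef, mem_filter]
            exact ⟨hsA (mem_of_mem_erase hu), hzadj u (mem_of_mem_erase hu) (ne_of_mem_erase hu)⟩
          -- degree inheritance
          have hdegw : ∀ v ∈ Aw, (1 - 2/(2*(p:ℝ)-3) + β) * (Aw.card : ℝ)
              ≤ ((Aw.filter fun u => Γ.Adj v u).card : ℝ) := by
            intro v hv
            have hvA : v ∈ A := by
              rw [hAwdef, mem_filter] at hv
              exact hv.1
            have hvdeg := hdeg' v hvA
            have hkey : ((A.filter fun u => Γ.Adj v u).card : ℝ) + (Aw.card:ℝ)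
                ≤ M + ((Aw.filter fun u => Γ.Adj v u).card : ℝ) := by
              have hsub : (A.filter fun u => Γ.Adj v u) ∩ Aw ⊆ Aw.filter fun u => Γ.Adj v u := by
                intro u hu
                rw [mem_inter] at hu
                rw [mem_filter]
                exact ⟨hu.2, (mem_filter.mp hu.1).2⟩
              have hUA : ((A.filter fun u => Γ.Adj v u) ∪ Aw) ⊆ A :=
                union_subset (filter_subset _ _) (by rw [hAwdef]; exact filter_subset _ _)
              have hcui := Finset.card_union_add_card_inter (A.filter fun u => Γ.Adj v u) Aw
              have h1 := Finset.card_le_card hsub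
              have h2 := Finset.card_le_card hUA
              have hq : (A.filter fun u => Γ.Adj v u).card + Aw.card
                  ≤ A.card + (Aw.filter fun u => Γ.Adj v u).card := by omega
              rw [hMdef]
              exact_mod_cast hq
            have hidM : (2/(2*(p:ℝ)-3)) * ((1 - 2/(2*(p:ℝ)-1))*M) = (2/(2*(p:ℝ)-1))*M := by
              rw [show (2/(2*(p:ℝ)-3)) * ((1 - 2/(2*(p:ℝ)-1))*M)
                  = ((2/(2*(p:ℝ)-3)) * (1 - 2/(2*(p:ℝ)-1)))*M from by ring]
              congr 1
              field_simp
              ring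
            have htc : 2/(2*(p:ℝ)-1) ≤ 2/(2*(p:ℝ)-3) := by
              apply div_le_div_of_nonneg_left (by norm_num) h2p3
              linarith
            have hprod : 0 ≤ (2/(2*(p:ℝ)-3) - β) * ((Aw.card:ℝ) - (1 - 2/(2*(p:ℝ)-1))*M) := by
              apply mul_nonneg
              · linarith
              · linarith only [hMW, mul_nonneg hβ.le hMnn]
            have hbcM : 0 ≤ β * ((2/(2*(p:ℝ)-1))*M) :=
              mul_nonneg hβ.le (mul_nonneg (by positivity) hMnn)
            nlinarith only [hkey, hvdeg, hprod, hidM, hbcM]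
          have hIH := IH Aw (s.erase (zf w)) hdegw hs' hs'Aw
          have hmono : y ≤ ((Aw.card:ℝ)/(8*(p:ℝ)))^(p-2) := by
            rw [hydef]
            apply pow_le_pow_left₀ (div_nonneg hM0nn (by positivity))
            exact (div_le_div_iff_of_pos_right (by positivity)).mpr hM0MW
          calc L ≤ (p.choose 2:ℝ)*(β*((Aw.card:ℝ)/(8*(p:ℝ)))^(p-2)) := by
                rw [hLdef]
                apply mul_le_mul_of_nonneg_left (mul_le_mul_of_nonneg_left hmono hβ.le) (by positivity)
            _ ≤ _ := hIH
        -- summation with overcount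
        have hsum_nat := overcount Γ p (by omega) A s X' hX'A hX's zf
        have hsum : (X'.card : ℝ) * L ≤ ((p:ℝ)-1) * (Tcnt Γ (p+1) A s : ℝ) := by
          have h1 : X'.card • L ≤ ∑ w ∈ X', (Tcnt Γ p (A.filter fun u => Γ.Adj w u) (s.erase (zf w)) : ℝ) :=
            Finset.card_nsmul_le_sum X' _ L hperw
          have h2 : (∑ w ∈ X', (Tcnt Γ p (A.filter fun u => Γ.Adj w u) (s.erase (zf w)) : ℝ))
              ≤ ((p-1:ℕ):ℝ) * (Tcnt Γ (p+1) A s : ℝ) := by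
            exact_mod_cast hsum_nat
          rw [nsmul_eq_mul] at h1
          rw [← ecast2]
          linarith
        -- the geometric bound on X'
        set r : ℝ := ((p:ℝ)*(2*(p:ℝ)-1))/(((p:ℝ)+1)*(2*(p:ℝ)-3)) with hrdef
        have hr0 : 0 ≤ r := by
          rw [hrdef]
          apply div_nonneg
          · exact mul_nonneg (by linarith only [hpr]) (by linarith only [hpr])
          · exact mul_nonneg (by linarith only [hpr]) (by linarith only [hpr])
        have habs : ∀ x : ℝ,
            ((p:ℝ)-2)/(2*(p:ℝ)-1) * M + ((p:ℝ)+1)*(β*M)/2 - ((p:ℝ)+1) ≤ x →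
            M/8 * r^(p-2) ≤ x := by
          intro x hx
          rcases lt_or_ge p 5 with hp5 | hp5
          · rcases (show p = 3 ∨ p = 4 by omega) with rfl | rfl
            · -- p = 3
              have hr : r = 5/4 := by rw [hrdef]; norm_num
              rw [hr]
              norm_num at hx hcase h8M ⊢
              rcases le_or_gt 92 M with hM92 | hM92
              · linarith only [hx, hM92, mul_nonneg hβ.le hMnn]
              · have hbm2 : 1024 < β * M^2 := by nlinarith only [hcase]
                have hbm : 11 < β*M := by nlinarith only [hbm2, hMpos, hM92]
                linarith only [hx, hbm, hMnn]
            · -- p = 4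
              have hr : r = 28/25 := by rw [hrdef]; norm_num
              rw [hr]
              norm_num at hx h8M ⊢
              linarith only [hx, mul_nonneg hβ.le hMnn, h8M]
          · -- p ≥ 5
            have hp5r : (5:ℝ) ≤ (p:ℝ) := by exact_mod_cast hp5
            have ha : r = 1 + 3/(((p:ℝ)+1)*(2*(p:ℝ)-3)) := by
              rw [hrdef]
              field_simp
              rw [add_div' _ _ _ (by linarith), div_left_inj' (by linarith)]
              ring
            set a : ℝ := 3/(((p:ℝ)+1)*(2*(p:ℝ)-3)) with hadef
            have ha0 : 0 ≤ a := by
              rw [hadef]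
              apply div_nonneg (by norm_num)
              exact mul_nonneg (by linarith only [hp5r]) (by linarith only [hp5r])
            have hcastp2 : ((p-2:ℕ):ℝ) = (p:ℝ)-2 := by
              rw [Nat.cast_sub (show 2 ≤ p by omega)]; push_cast; ring
            have hna : ((p-2:ℕ):ℝ) * a ≤ 1/4 := by
              rw [hcastp2, hadef]
              rw [show ((p:ℝ)-2) * (3/(((p:ℝ)+1)*(2*(p:ℝ)-3))) = (3*((p:ℝ)-2))/(((p:ℝ)+1)*(2*(p:ℝ)-3)) from by ring]
              rw [div_le_div_iff₀ (mul_pos (by linarith only [hp5r]) (by linarith only [hp5r])) (by norm_num)]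
              nlinarith only [mul_nonneg (show (0:ℝ) ≤ 2*(p:ℝ)-7 by linarith only [hp5r]) (show (0:ℝ) ≤ (p:ℝ)-3 by linarith only [hp5r])]
            have hpow := aux_pow_bound a ha0 (p-2)
            have hrp : r^(p-2) ≤ 4/3 := by
              rw [ha]
              nlinarith only [hpow, pow_nonneg (show (0:ℝ) ≤ 1+a by linarith only [ha0]) (p-2), hna]
            have h13 : (1/3:ℝ) ≤ ((p:ℝ)-2)/(2*(p:ℝ)-1) := by
              rw [le_div_iff₀ h2p1]
              linarith only [hp5r]
            have hdm : 0 ≤ (((p:ℝ)-2)/(2*(p:ℝ)-1) - 1/3) * M :=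
              mul_nonneg (by linarith) hMnn
            have hbm : 0 ≤ ((p:ℝ)+1)*(β*M)/2 := by
              apply div_nonneg _ (by norm_num)
              exact mul_nonneg (by linarith) (mul_nonneg hβ.le hMnn)
            have hr8 : M/8 * r^(p-2) ≤ M/6 := by
              nlinarith only [hrp, hMnn, pow_nonneg hr0 (p-2)]
            linarith only [hx, hdm, hbm, hr8, h8M]
        have hX'geo : M/8 * r^(p-2) ≤ (X'.card : ℝ) := habs _ hX'low
        -- assemble everything
        have hp0 : (p:ℝ) ≠ 0 := by linarith
        have hp1ne : (p:ℝ)+1 ≠ 0 := by linarith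
        have h2p1ne : 2*(p:ℝ)-1 ≠ 0 := ne_of_gt h2p1
        have h2p3ne : 2*(p:ℝ)-3 ≠ 0 := ne_of_gt h2p3
        have hrM : M/(8*((p:ℝ)+1)) = r * (M0/(8*(p:ℝ))) := by
          rw [hrdef, hM0def]
          field_simp
          rw [eq_div_iff (mul_ne_zero (by linarith) (by linarith))]
          ring
        have hgoal_pow : (M/(8*((p:ℝ)+1)))^(p-1) = (M/(8*((p:ℝ)+1))) * (r^(p-2) * y) := by
          conv_lhs => rw [show p - 1 = (p-2)+1 from by omega, pow_succ]
          rw [hydef, mul_comm ((M/(8*((p:ℝ)+1)))^(p-2)) (M/(8*((p:ℝ)+1)))]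
          congr 1
          rw [hrM, mul_pow]
        have hC2 : (((p+1).choose 2 : ℕ):ℝ) = ((p:ℝ)+1)*(p:ℝ)/2 := by
          rw [Nat.cast_choose_two]
          push_cast
          ring
        have hCp : ((p.choose 2 : ℕ):ℝ) = (p:ℝ)*((p:ℝ)-1)/2 := by
          rw [Nat.cast_choose_two]
        have hLHS : ((p:ℝ)-1) * (((p+1).choose 2 : ℝ) * (β * (M/(8*((p:ℝ)+1)))^(p-1)))
            = (M/8 * r^(p-2)) * L := by
          rw [hgoal_pow, hC2, hLdef, hCp]
          field_simp
        have hfin : ((p:ℝ)-1) * (((p+1).choose 2 : ℝ) * (β * (M/(8*((p:ℝ)+1)))^(p-1)))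
            ≤ ((p:ℝ)-1) * (Tcnt Γ (p+1) A s : ℝ) := by
          rw [hLHS]
          calc (M/8 * r^(p-2)) * L ≤ (X'.card:ℝ) * L :=
                mul_le_mul_of_nonneg_right hX'geo hLnn
            _ ≤ ((p:ℝ)-1) * (Tcnt Γ (p+1) A s : ℝ) := hsum
        have hppos : (0:ℝ) < (p:ℝ)-1 := by linarith
        exact le_of_mul_le_mul_left hfin hppos

end KeyLemma

theorem every_clique_has_heavy_edge (p : ℕ) (hp : 3 ≤ p) (β : ℝ) (hβ : 0 < β)
    (m : ℕ) (Γ : SimpleGraph (Fin m))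
    (hdeg : ∀ v, (1 - 2 / (2 * (p : ℝ) - 3) + β) * m ≤ (degCount Γ v : ℝ)) :
    ∀ s : Finset (Fin m), Γ.IsNClique p s →
      ∃ u v : Fin m, u ∈ s ∧ v ∈ s ∧ Γ.Adj u v ∧
        β * ((m : ℝ) / (8 * p)) ^ (p - 2)
          ≤ ({q : Finset (Fin m) | Γ.IsNClique p q ∧ u ∈ q ∧ v ∈ q}.ncard : ℝ) := by
  intro s hs
  have hMuniv : (((univ : Finset (Fin m)).card : ℕ) : ℝ) = (m:ℝ) := by
    rw [card_univ, Fintype.card_fin]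
  have hdeg' : ∀ v ∈ (univ : Finset (Fin m)),
      (1 - 2/(2*(p:ℝ)-3) + β) * (((univ : Finset (Fin m)).card : ℕ) : ℝ)
        ≤ (((univ.filter fun u => Γ.Adj v u)).card : ℝ) := by
    intro v _
    have h := hdeg v
    have h1 : degCount Γ v = (univ.filter fun u => Γ.Adj v u).card := by
      rw [degCount, show Γ.neighborSet v = ↑(univ.filter fun u => Γ.Adj v u) from by
        ext u; simp [SimpleGraph.mem_neighborSet]]
      exact Set.ncard_coe_finset _
    rw [hMuniv]
    rw [h1] at h
    exact h
  have hkey := key Γ β hβ p hp univ s hdeg' hs (subset_univ s)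
  have hne : (s.powersetCard 2).Nonempty := by
    obtain ⟨t, ht, hc⟩ := Finset.exists_subset_card_eq (show 2 ≤ s.card by rw [hs.2]; omega)
    exact ⟨t, mem_powersetCard.mpr ⟨ht, hc⟩⟩
  have hTsum : (Tcnt Γ p univ s : ℝ) = ∑ e ∈ s.powersetCard 2, ((cliqueBtw Γ p univ e).card : ℝ) := by
    rw [Tcnt]
    push_cast
    rfl
  have hsumge : ∑ _e ∈ s.powersetCard 2,
      (β * ((((univ : Finset (Fin m)).card : ℕ) : ℝ)/(8*(p:ℝ)))^(p-2))
      ≤ ∑ e ∈ s.powersetCard 2, ((cliqueBtw Γ p univ e).card : ℝ) := by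
    rw [Finset.sum_const, card_powersetCard, hs.2, nsmul_eq_mul, ← hTsum]
    exact hkey
  obtain ⟨e, hemem, hle⟩ := Finset.exists_le_of_sum_le hne hsumge
  rw [mem_powersetCard] at hemem
  obtain ⟨hesub, hecard⟩ := hemem
  obtain ⟨u, v, huv, rfl⟩ := Finset.card_eq_two.mp hecard
  have hu : u ∈ s := hesub (mem_insert_self _ _)
  have hv : v ∈ s := hesub (by simp)
  refine ⟨u, v, hu, hv, hs.1 (Finset.mem_coe.mpr hu) (Finset.mem_coe.mpr hv) huv, ?_⟩
  have hsec : {q : Finset (Fin m) | Γ.IsNClique p q ∧ u ∈ q ∧ v ∈ q}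
      = ↑(cliqueBtw Γ p univ ({u,v} : Finset (Fin m))) := by
    ext q
    simp only [cliqueBtw, coe_filter, Set.mem_setOf_eq, mem_powersetCard, subset_univ, true_and]
    constructor
    · rintro ⟨hq, hqu, hqv⟩
      exact ⟨hq.2, hq, insert_subset hqu (singleton_subset_iff.mpr hqv)⟩
    · rintro ⟨_, hq, hsub⟩
      exact ⟨hq, hsub (mem_insert_self _ _), hsub (by simp)⟩
  rw [hsec, Set.ncard_coe_finset]
  rw [hMuniv] at hle
  exact hle
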